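/- Let f : [−1,1] → ℝ be convex with f(0) = 0, let δ > 0, and let k := inf{ k̃ ≥ 0 : δ/2 + k̃x² ≥ f(x) for all x ∈ [−1,1] }. If max_{x∈[−1,1]} f(x) > δ/2, then k > 0 and there exists ξ ∈ [−1,1], ξ ≠ 0, with f(ξ) − kξ² = δ/2 and f(x) − kx² ≤ δ/2 for all x ∈ [−1,1]. -/

import Mathlib

theorem touching_parabola (f : ℝ → ℝ) (hconv : ConvexOn ℝ (Set.Icc (-1 : ℝ) 1) f)
    (hf0 : f 0 = 0) (δ : ℝ) (hδ : 0 < δ)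
    (k : ℝ)
    (hk : k = sInf {k' : ℝ | 0 ≤ k' ∧ ∀ x ∈ Set.Icc (-1 : ℝ) 1, f x ≤ δ / 2 + k' * x ^ 2})
    (hmax : ∃ x ∈ Set.Icc (-1 : ℝ) 1, δ / 2 < f x) :
    0 < k ∧ ∃ ξ ∈ Set.Icc (-1 : ℝ) 1, ξ ≠ 0 ∧ f ξ - k * ξ ^ 2 = δ / 2 ∧
      ∀ x ∈ Set.Icc (-1 : ℝ) 1, f x - k * x ^ 2 ≤ δ / 2 := by
  obtain ⟨x₀, hx₀, hfx₀⟩ := hmax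
  set S : Set ℝ := {k' : ℝ | 0 ≤ k' ∧ ∀ x ∈ Set.Icc (-1 : ℝ) 1, f x ≤ δ / 2 + k' * x ^ 2}
    with hSdef
  have h1 : (1:ℝ) ∈ Set.Icc (-1:ℝ) 1 := by norm_num
  have hm1 : (-1:ℝ) ∈ Set.Icc (-1:ℝ) 1 := by norm_num
  have h0 : (0:ℝ) ∈ Set.Icc (-1:ℝ) 1 := by norm_num
  set M : ℝ := max (f 1) (max (f (-1)) 0) with hMdef
  have hM0 : 0 ≤ M := le_max_of_le_right (le_max_right _ _)
  have hMf1 : f 1 ≤ M := le_max_left _ _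
  have hMfm1 : f (-1) ≤ M := le_max_of_le_right (le_max_left _ _)
  have hMb : ∀ x ∈ Set.Icc (-1:ℝ) 1, f x ≤ M * |x| := by
    intro x hx
    rcases le_or_gt 0 x with hx0 | hx0
    · have key := hconv.2 h0 h1 (by linarith [hx.2] : (0:ℝ) ≤ 1 - x) hx0 (by ring)
      simp only [smul_eq_mul, mul_zero, mul_one, zero_add] at key
      rw [abs_of_nonneg hx0, hf0] at *
      nlinarith
    · have key := hconv.2 h0 hm1 (by linarith [hx.1] : (0:ℝ) ≤ 1 + x)
        (by linarith : (0:ℝ) ≤ -x) (by ring)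
      simp only [smul_eq_mul, mul_zero, mul_neg, mul_one, zero_add, neg_neg] at key
      rw [abs_of_nonpos (le_of_lt hx0), hf0] at *
      nlinarith
  have hSne : S.Nonempty := by
    refine ⟨M^2/(2*δ), by positivity, fun x hx => ?_⟩
    have hb := hMb x hx
    have hnn : 0 ≤ (δ - M*|x|)^2/(2*δ) := by positivity
    have heq : δ/2 + M^2/(2*δ)*x^2 - M*|x| = (δ - M*|x|)^2/(2*δ) := by
      field_simp
      linear_combination (-(M^2)) * sq_abs x
    linarith
  have hSbdd : BddBelow S := ⟨0, fun k' hk' => hk'.1⟩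
  have hx₀sq : x₀^2 ≤ 1 := by nlinarith [hx₀.1, hx₀.2]
  have hub : ∀ k' ∈ S, f x₀ - δ/2 ≤ k' := by
    intro k' hk'
    have := hk'.2 x₀ hx₀
    nlinarith [hk'.1]
  have hkpos : 0 < k := by
    rw [hk]
    exact lt_of_lt_of_le (by linarith) (le_csInf hSne hub)
  have hkS : ∀ x ∈ Set.Icc (-1:ℝ) 1, f x ≤ δ/2 + k * x^2 := by
    intro x hx
    rcases eq_or_ne x 0 with rfl | hx0
    · simp [hf0]; linarith
    · have hx2 : 0 < x^2 := by positivity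
      have hle : (f x - δ/2)/x^2 ≤ k := by
        rw [hk]
        refine le_csInf hSne (fun k' hk' => ?_)
        have := hk'.2 x hx
        rw [div_le_iff₀ hx2]
        linarith
      rw [div_le_iff₀ hx2] at hle
      linarith
  -- upper semicontinuity bound at any point
  have husc : ∀ ξ ∈ Set.Icc (-1:ℝ) 1, ∃ C : ℝ, 0 ≤ C ∧
      ∀ x ∈ Set.Icc (-1:ℝ) 1, f x ≤ f ξ + C * |x - ξ| := by
    intro ξ hξ
    refine ⟨max (max ((f 1 - f ξ)/(1-ξ)) ((f (-1) - f ξ)/(1+ξ))) 0, le_max_right _ _, ?_⟩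
    set C : ℝ := max (max ((f 1 - f ξ)/(1-ξ)) ((f (-1) - f ξ)/(1+ξ))) 0 with hCdef
    have hC0 : (0:ℝ) ≤ C := le_max_right _ _
    intro x hx
    rcases le_total ξ x with hcase | hcase
    · rcases eq_or_lt_of_le hξ.2 with heq | hlt
      · have hxe : x = ξ := le_antisymm (heq ▸ hx.2) hcase
        subst hxe
        simp
      · have h1ξ : 0 < 1 - ξ := by linarith
        set t : ℝ := (x - ξ)/(1-ξ) with htdef
        have ht0 : 0 ≤ t := div_nonneg (by linarith) (by linarith)
        have ht1 : t ≤ 1 := by rw [div_le_one h1ξ]; linarith [hx.2]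
        have key := hconv.2 hξ h1 (by linarith : (0:ℝ) ≤ 1 - t) ht0 (by ring)
        have hne : (1:ℝ) - ξ ≠ 0 := ne_of_gt h1ξ
        have heq : (1-t) • ξ + t • (1:ℝ) = x := by
          rw [htdef, smul_eq_mul, smul_eq_mul]
          field_simp
          ring
        rw [heq] at key
        simp only [smul_eq_mul] at key
        have hCge : (f 1 - f ξ)/(1-ξ) ≤ C := le_max_of_le_left (le_max_left _ _)
        have habs : |x - ξ| = x - ξ := abs_of_nonneg (by linarith)
        have hteq : t * (f 1 - f ξ) = (x - ξ) * ((f 1 - f ξ)/(1-ξ)) := by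
          rw [htdef]; field_simp
        have hmul : (x - ξ) * ((f 1 - f ξ)/(1-ξ)) ≤ (x - ξ) * C :=
          mul_le_mul_of_nonneg_left hCge (by linarith)
        calc f x ≤ (1-t) * f ξ + t * f 1 := key
          _ = f ξ + t * (f 1 - f ξ) := by ring
          _ = f ξ + (x - ξ) * ((f 1 - f ξ)/(1-ξ)) := by rw [hteq]
          _ ≤ f ξ + (x - ξ) * C := by linarith
          _ = f ξ + C * |x - ξ| := by rw [habs]; ring
    · rcases eq_or_lt_of_le hξ.1 with heq | hlt
      · have hxe : x = ξ := le_antisymm hcase (heq ▸ hx.1)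
        subst hxe
        simp
      · have h1ξ : 0 < 1 + ξ := by linarith
        set t : ℝ := (ξ - x)/(1+ξ) with htdef
        have ht0 : 0 ≤ t := div_nonneg (by linarith) (by linarith)
        have ht1 : t ≤ 1 := by rw [div_le_one h1ξ]; linarith [hx.1]
        have key := hconv.2 hξ hm1 (by linarith : (0:ℝ) ≤ 1 - t) ht0 (by ring)
        have hne : (1:ℝ) + ξ ≠ 0 := ne_of_gt h1ξ
        have heq : (1-t) • ξ + t • (-1:ℝ) = x := by
          rw [htdef, smul_eq_mul, smul_eq_mul]
          field_simp
          ring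
        rw [heq] at key
        simp only [smul_eq_mul] at key
        have hCge : (f (-1) - f ξ)/(1+ξ) ≤ C := le_max_of_le_left (le_max_right _ _)
        have habs : |x - ξ| = ξ - x := by rw [abs_sub_comm]; exact abs_of_nonneg (by linarith)
        have hteq : t * (f (-1) - f ξ) = (ξ - x) * ((f (-1) - f ξ)/(1+ξ)) := by
          rw [htdef]; field_simp
        have hmul : (ξ - x) * ((f (-1) - f ξ)/(1+ξ)) ≤ (ξ - x) * C :=
          mul_le_mul_of_nonneg_left hCge (by linarith)
        calc f x ≤ (1-t) * f ξ + t * f (-1) := key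
          _ = f ξ + t * (f (-1) - f ξ) := by ring
          _ = f ξ + (ξ - x) * ((f (-1) - f ξ)/(1+ξ)) := by rw [hteq]
          _ ≤ f ξ + (ξ - x) * C := by linarith
          _ = f ξ + C * |x - ξ| := by rw [habs]; ring
  -- a sequence of near-touching points
  have hseq : ∀ n : ℕ, ∃ x ∈ Set.Icc (-1:ℝ) 1,
      δ/2 + (k * ((n:ℝ)/(n+1))) * x^2 < f x := by
    intro n
    by_contra hcon
    push_neg at hcon
    have hmem : k * ((n:ℝ)/(n+1)) ∈ S := ⟨by positivity, fun x hx => hcon x hx⟩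
    have hle : k ≤ k * ((n:ℝ)/(n+1)) := by
      have := csInf_le hSbdd hmem
      rw [← hk] at this
      exact this
    have hlt1 : (n:ℝ)/(n+1) < 1 := by
      rw [div_lt_one (by positivity)]
      linarith
    nlinarith
  choose x hxmem hxlt using hseq
  obtain ⟨ξ, hξ, φ, hφ, htend⟩ := isCompact_Icc.tendsto_subseq hxmem
  obtain ⟨C, hC0, hCb⟩ := husc ξ hξ
  have hlim1 : Filter.Tendsto (fun n => ((φ n : ℝ))/((φ n : ℝ) + 1)) Filter.atTop (nhds 1) :=
    (tendsto_natCast_div_add_atTop (1:ℝ)).comp hφ.tendsto_atTop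
  have key : δ/2 + k * ξ^2 ≤ f ξ := by
    have hfn : ∀ n, δ/2 + (k * ((φ n : ℝ)/((φ n : ℝ)+1))) * (x (φ n))^2
        - C * |x (φ n) - ξ| ≤ f ξ := by
      intro n
      have h1 := hxlt (φ n)
      have h2 := hCb (x (φ n)) (hxmem (φ n))
      linarith
    have htend2 : Filter.Tendsto
        (fun n => δ/2 + (k * ((φ n : ℝ)/((φ n : ℝ)+1))) * (x (φ n))^2 - C * |x (φ n) - ξ|)
        Filter.atTop (nhds (δ/2 + (k * 1) * ξ^2 - C * |ξ - ξ|)) := by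
      exact ((tendsto_const_nhds.add
        (((tendsto_const_nhds.mul hlim1)).mul (htend.pow 2))).sub
        (tendsto_const_nhds.mul ((htend.sub tendsto_const_nhds).abs)))
    have hle := le_of_tendsto htend2 (Filter.Eventually.of_forall hfn)
    simpa using hle
  have hξne : ξ ≠ 0 := by
    intro h
    rw [h] at key
    simp [hf0] at key
    linarith
  refine ⟨hkpos, ξ, hξ, hξne, ?_, ?_⟩
  · have := hkS ξ hξ
    linarith
  · intro y hy
    have := hkS y hy
    linarith
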